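/- Suppose (S,T) is a norm N-patched asymmetric code of length n with coordinate n acceptable, K₁ ⊆ {0,1}^{n'} has asymmetric norm N' with respect to its first coordinate, and K₂ ⊆ {0,1}^{n'} has asymmetric norm N+N'-1 with respect to its first coordinate. Then (S ⊕̇ K₁) ∪ (T ⊕̇ K₂) ⊆ {0,1}^{n+n'-1} has asymmetric norm N+N'-1 with respect to coordinate n. -/

import Mathlib

open Finset

abbrev Vec (n : ℕ) := Fin n → Bool

noncomputable def dS {n : ℕ} (x : Vec n) (Y : Set (Vec n)) : ℕ∞ :=
  ⨅ y ∈ Y, (hammingDist x y : ℕ∞)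

noncomputable def dA {n : ℕ} (x : Vec n) (Y : Set (Vec n)) : ℕ∞ :=
  ⨅ y ∈ {y ∈ Y | ∀ i, x i ≤ y i}, (hammingDist x y : ℕ∞)

def sec {n : ℕ} (C : Set (Vec n)) (i : Fin n) (b : Bool) : Set (Vec n) :=
  {c ∈ C | c i = b}

def NormAt {n : ℕ} (C : Set (Vec n)) (i : Fin n) (N : ℕ) : Prop :=
  ∀ x : Vec n, dS x (sec C i false) + dS x (sec C i true) ≤ (N : ℕ∞)

def AsymNormAt {n : ℕ} (C : Set (Vec n)) (i : Fin n) (N : ℕ) : Prop :=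
  ∀ x : Vec n,
    (x i = false → dA x (sec C i false) + dA x (sec C i true) ≤ (N : ℕ∞)) ∧
    (x i = true → 2 * dA x (sec C i true) + 1 ≤ (N : ℕ∞))

def ads {nA nB : ℕ} (A : Set (Vec (nA+1))) (B : Set (Vec (nB+1))) :
    Set (Vec (nA+1+nB)) :=
  {z | ∃ (a : Fin nA → Bool) (t : Bool) (b : Fin nB → Bool),
    Fin.snoc a t ∈ A ∧ Fin.cons t b ∈ B ∧ z = Fin.append (Fin.snoc a t) b}

def flipCoord {n : ℕ} (x : Vec n) (i : Fin n) : Vec n := Function.update x i (!x i)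

def PatchedAt {n : ℕ} (S T : Set (Vec n)) (i : Fin n) (N : ℕ) : Prop :=
  ∀ x : Vec n, (dS x (sec S i false) + dS x (sec S i true) ≤ (N : ℕ∞))
    ∨ (x ∈ T ∧ flipCoord x i ∈ T)

def AsymPatchedAt {n : ℕ} (S T : Set (Vec n)) (i : Fin n) (N : ℕ) : Prop :=
  ∀ x : Vec n,
    (x i = false → (dA x (sec S i false) + dA x (sec S i true) ≤ (N : ℕ∞))
       ∨ (x ∈ T ∧ flipCoord x i ∈ T)) ∧
    (x i = true → (2 * dA x (sec S i true) + 1 ≤ (N : ℕ∞)) ∨ x ∈ T)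


lemma hd_sum {n : ℕ} (x y : Vec n) : hammingDist x y = ∑ i, if x i ≠ y i then 1 else 0 := by
  rw [hammingDist, Finset.card_filter]

lemma hd_snoc {m : ℕ} (u u' : Vec m) (s s' : Bool) :
    hammingDist (Fin.snoc u s : Vec (m+1)) (Fin.snoc u' s') =
      hammingDist u u' + (if s ≠ s' then 1 else 0) := by
  rw [hd_sum, hd_sum, Fin.sum_univ_castSucc]
  simp only [Fin.snoc_castSucc, Fin.snoc_last]

lemma hd_cons {k : ℕ} (v v' : Vec k) (s s' : Bool) :
    hammingDist (Fin.cons s v : Vec (k+1)) (Fin.cons s' v') =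
      (if s ≠ s' then 1 else 0) + hammingDist v v' := by
  rw [hd_sum, hd_sum, Fin.sum_univ_succ]
  simp only [Fin.cons_zero, Fin.cons_succ]

lemma hd_append {m k : ℕ} (u u' : Vec m) (v v' : Vec k) :
    hammingDist (Fin.append u v) (Fin.append u' v') = hammingDist u u' + hammingDist v v' := by
  simp only [hd_sum, Fin.sum_univ_add, Fin.append_left, Fin.append_right]

lemma enat_exists (a : ℕ∞) (h : a ≠ ⊤) : ∃ m : ℕ, a = (m : ℕ∞) := by
  lift a to ℕ using h with m
  exact ⟨m, rfl⟩

lemma dA_le {n : ℕ} (x y : Vec n) (Y : Set (Vec n)) (hy : y ∈ Y) (hle : ∀ i, x i ≤ y i) :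
    dA x Y ≤ (hammingDist x y : ℕ∞) :=
  iInf₂_le y ⟨hy, hle⟩

lemma exists_of_dA_le {n : ℕ} (x : Vec n) (Y : Set (Vec n)) (m : ℕ) (h : dA x Y ≤ (m : ℕ∞)) :
    ∃ y ∈ Y, (∀ i, x i ≤ y i) ∧ hammingDist x y ≤ m := by
  by_contra hc
  push_neg at hc
  have h2 : ((m : ℕ∞) + 1) ≤ dA x Y := by
    refine le_iInf₂ fun y hy => ?_
    obtain ⟨hyY, hyle⟩ := hy
    have := hc y hyY hyle
    exact_mod_cast Nat.succ_le_of_lt this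
  have h3 := le_trans h2 h
  have h4 : (m : ℕ∞) < (m : ℕ∞) + 1 := by
    exact_mod_cast Nat.lt_succ_self m
  exact absurd h3 (not_le.mpr h4)

lemma exists_of_two_mul_dA {n : ℕ} (x : Vec n) (Y : Set (Vec n)) {M : ℕ}
    (h : 2 * dA x Y + 1 ≤ (M : ℕ∞)) :
    ∃ y ∈ Y, (∀ i, x i ≤ y i) ∧ 2 * hammingDist x y + 1 ≤ M := by
  have hself : dA x Y ≤ 2 * dA x Y + 1 :=
    le_trans (le_mul_of_one_le_left zero_le one_le_two) le_self_add
  have hne : dA x Y ≠ ⊤ := (lt_of_le_of_lt (le_trans hself h) (WithTop.coe_lt_top M)).ne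
  obtain ⟨m, hm⟩ := enat_exists _ hne
  obtain ⟨y, hy, hle, hd⟩ := exists_of_dA_le x Y m (le_of_eq hm)
  refine ⟨y, hy, hle, ?_⟩
  rw [hm] at h
  have : (2 * m + 1 : ℕ) ≤ M := by exact_mod_cast h
  omega

lemma exists_of_dA_pair {n : ℕ} (x : Vec n) (Yf Yt : Set (Vec n)) {M : ℕ}
    (h : dA x Yf + dA x Yt ≤ (M : ℕ∞)) :
    ∃ yf ∈ Yf, ∃ yt ∈ Yt, (∀ i, x i ≤ yf i) ∧ (∀ i, x i ≤ yt i) ∧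
      hammingDist x yf + hammingDist x yt ≤ M := by
  have h1 : dA x Yf ≠ ⊤ := (lt_of_le_of_lt (le_trans le_self_add h) (WithTop.coe_lt_top M)).ne
  have h2 : dA x Yt ≠ ⊤ := (lt_of_le_of_lt (le_trans le_add_self h) (WithTop.coe_lt_top M)).ne
  obtain ⟨mf, hmf⟩ := enat_exists _ h1
  obtain ⟨mt, hmt⟩ := enat_exists _ h2
  obtain ⟨yf, hyf, hlef, hdf⟩ := exists_of_dA_le x Yf mf (le_of_eq hmf)
  obtain ⟨yt, hyt, hlet, hdt⟩ := exists_of_dA_le x Yt mt (le_of_eq hmt)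
  rw [hmf, hmt] at h
  have : mf + mt ≤ M := by exact_mod_cast h
  exact ⟨yf, hyf, yt, hyt, hlef, hlet, by omega⟩

lemma key_witness {n n' : ℕ} (A : Set (Vec (n+1))) (B : Set (Vec (n'+1)))
    (u : Vec (n+1)) (v : Vec n') (t s : Bool)
    (y1 : Vec (n+1)) (y2 : Vec (n'+1))
    (hy1A : y1 ∈ A) (hy1s : y1 (Fin.last n) = s)
    (hy2B : y2 ∈ B) (hy2s : y2 0 = s)
    (hle1 : ∀ i, u i ≤ y1 i) (hle2 : ∀ j, (Fin.cons t v : Vec (n'+1)) j ≤ y2 j) :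
    ∃ z ∈ sec (ads A B) (Fin.castAdd n' (Fin.last n)) s,
      (∀ i, Fin.append u v i ≤ z i) ∧
      hammingDist (Fin.append u v) z + (if t ≠ s then 1 else 0)
        = hammingDist u y1 + hammingDist (Fin.cons t v : Vec (n'+1)) y2 := by
  have e1 : Fin.snoc (Fin.init y1) s = y1 := by
    rw [← hy1s]; exact Fin.snoc_init_self y1
  have e2 : Fin.cons s (Fin.tail y2) = y2 := by
    rw [← hy2s]; exact Fin.cons_self_tail y2
  refine ⟨Fin.append y1 (Fin.tail y2), ⟨⟨Fin.init y1, s, Fin.tail y2, ?_, ?_, ?_⟩, ?_⟩, ?_, ?_⟩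
  · rw [e1]; exact hy1A
  · rw [e2]; exact hy2B
  · rw [e1]
  · show Fin.append y1 (Fin.tail y2) (Fin.castAdd n' (Fin.last n)) = s
    rw [Fin.append_left]; exact hy1s
  · intro i
    induction i using Fin.addCases with
    | left i => rw [Fin.append_left, Fin.append_left]; exact hle1 i
    | right j =>
      rw [Fin.append_right, Fin.append_right]
      have := hle2 j.succ
      rwa [Fin.cons_succ] at this
  · have h2 := hd_cons v (Fin.tail y2) t s
    rw [e2] at h2
    rw [hd_append, h2]
    omega

theorem asds_asym_norm (n n' N N' : ℕ)
    (S T : Set (Vec (n + 1))) (K1 K2 : Set (Vec (n' + 1)))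
    (hST : AsymPatchedAt S T (Fin.last n) N)
    (hK1 : AsymNormAt K1 0 N') (hK2 : AsymNormAt K2 0 (N + N' - 1)) :
    AsymNormAt (ads S K1 ∪ ads T K2) (Fin.castAdd n' (Fin.last n)) (N + N' - 1) := by
  intro x
  set i0 : Fin (n+1+n') := Fin.castAdd n' (Fin.last n) with hi0
  set u : Vec (n+1) := fun i => x (Fin.castAdd n' i) with hu_def
  set v : Vec n' := fun j => x (Fin.natAdd (n+1) j) with hv_def
  have hx : x = Fin.append u v := by
    funext i
    induction i using Fin.addCases with
    | left i => rw [Fin.append_left]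
    | right j => rw [Fin.append_right]
  have hxi : x i0 = u (Fin.last n) := rfl
  have hsecmono : ∀ (D : Set (Vec (n+1+n'))) (s : Bool) (z : Vec (n+1+n')),
      D ⊆ ads S K1 ∪ ads T K2 → z ∈ sec D i0 s →
      z ∈ sec (ads S K1 ∪ ads T K2) i0 s := fun D s z hD hz => ⟨hD hz.1, hz.2⟩
  constructor
  · -- x i0 = false
    intro hxf
    have hu : u (Fin.last n) = false := by rw [← hxi]; exact hxf
    rcases (hST u).1 hu with hS | ⟨huT, hfT⟩
    · obtain ⟨y1f, hy1f, y1t, hy1t, hle1f, hle1t, hd1⟩ := exists_of_dA_pair u _ _ hS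
      have hKb := (hK1 (Fin.cons false v)).1 (Fin.cons_zero _ _)
      obtain ⟨y2f, hy2f, y2t, hy2t, hle2f, hle2t, hd2⟩ := exists_of_dA_pair _ _ _ hKb
      obtain ⟨zf, hzf, hzlef, hzdf⟩ :=
        key_witness S K1 u v false false y1f y2f hy1f.1 hy1f.2 hy2f.1 hy2f.2 hle1f hle2f
      obtain ⟨zt, hzt, hzlet, hzdt⟩ :=
        key_witness S K1 u v false true y1t y2t hy1t.1 hy1t.2 hy2t.1 hy2t.2 hle1t hle2t
      simp only [ne_eq, not_true_eq_false, if_false, not_false_eq_true, if_true,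
        Bool.false_eq_true] at hzdf hzdt
      have hbf : dA x (sec (ads S K1 ∪ ads T K2) i0 false) ≤
          (hammingDist (Fin.append u v) zf : ℕ∞) := by
        rw [hx]
        exact dA_le _ zf _ ⟨Or.inl hzf.1, hzf.2⟩ hzlef
      have hbt : dA x (sec (ads S K1 ∪ ads T K2) i0 true) ≤
          (hammingDist (Fin.append u v) zt : ℕ∞) := by
        rw [hx]
        exact dA_le _ zt _ ⟨Or.inl hzt.1, hzt.2⟩ hzlet
      have hnat : hammingDist (Fin.append u v) zf + hammingDist (Fin.append u v) zt
          ≤ N + N' - 1 := by omega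
      calc dA x (sec (ads S K1 ∪ ads T K2) i0 false) +
            dA x (sec (ads S K1 ∪ ads T K2) i0 true)
          ≤ (hammingDist (Fin.append u v) zf : ℕ∞) + hammingDist (Fin.append u v) zt :=
            add_le_add hbf hbt
        _ ≤ ((N + N' - 1 : ℕ) : ℕ∞) := by exact_mod_cast hnat
    · -- patched case
      have hKb := (hK2 (Fin.cons false v)).1 (Fin.cons_zero _ _)
      obtain ⟨y2f, hy2f, y2t, hy2t, hle2f, hle2t, hd2⟩ := exists_of_dA_pair _ _ _ hKb
      have eu : Fin.snoc (Fin.init u) false = u := by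
        rw [← hu]; exact Fin.snoc_init_self u
      have eflip : flipCoord u (Fin.last n) = Fin.snoc (Fin.init u) true := by
        funext i
        induction i using Fin.lastCases with
        | last =>
          rw [Fin.snoc_last]
          show Function.update u (Fin.last n) (!u (Fin.last n)) (Fin.last n) = true
          rw [Function.update_self, hu]
          rfl
        | cast i =>
          rw [Fin.snoc_castSucc]
          show Function.update u (Fin.last n) (!u (Fin.last n)) i.castSucc = Fin.init u i
          rw [Function.update_of_ne (Fin.castSucc_lt_last i).ne]
          rfl
      obtain ⟨zf, hzf, hzlef, hzdf⟩ :=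
        key_witness T K2 u v false false u y2f huT hu hy2f.1 hy2f.2
          (fun i => le_refl _) hle2f
      obtain ⟨zt, hzt, hzlet, hzdt⟩ :=
        key_witness T K2 u v false true (flipCoord u (Fin.last n)) y2t hfT
          (by rw [eflip, Fin.snoc_last]) hy2t.1 hy2t.2
          (by
            intro i
            rw [eflip]
            induction i using Fin.lastCases with
            | last => rw [Fin.snoc_last, hu]; exact Bool.false_le _
            | cast i => rw [Fin.snoc_castSucc]; exact le_refl _)
          hle2t
      have hduu : hammingDist u u = 0 := hammingDist_self u
      have hdflip : hammingDist u (flipCoord u (Fin.last n)) = 1 := by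
        have h0 := hd_snoc (Fin.init u) (Fin.init u) false true
        rw [eu, ← eflip, hammingDist_self] at h0
        norm_num at h0
        exact h0
      rw [hduu] at hzdf
      rw [hdflip] at hzdt
      simp only [ne_eq, not_true_eq_false, if_false, not_false_eq_true, if_true,
        Bool.false_eq_true] at hzdf hzdt
      have hbf : dA x (sec (ads S K1 ∪ ads T K2) i0 false) ≤
          (hammingDist (Fin.append u v) zf : ℕ∞) := by
        rw [hx]; exact dA_le _ zf _ ⟨Or.inr hzf.1, hzf.2⟩ hzlef
      have hbt : dA x (sec (ads S K1 ∪ ads T K2) i0 true) ≤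
          (hammingDist (Fin.append u v) zt : ℕ∞) := by
        rw [hx]; exact dA_le _ zt _ ⟨Or.inr hzt.1, hzt.2⟩ hzlet
      have hnat : hammingDist (Fin.append u v) zf + hammingDist (Fin.append u v) zt
          ≤ N + N' - 1 := by omega
      calc dA x (sec (ads S K1 ∪ ads T K2) i0 false) +
            dA x (sec (ads S K1 ∪ ads T K2) i0 true)
          ≤ (hammingDist (Fin.append u v) zf : ℕ∞) + hammingDist (Fin.append u v) zt :=
            add_le_add hbf hbt
        _ ≤ ((N + N' - 1 : ℕ) : ℕ∞) := by exact_mod_cast hnat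
  · -- x i0 = true
    intro hxt
    have hu : u (Fin.last n) = true := by rw [← hxi]; exact hxt
    have hKb := (hK1 (Fin.cons true v)).2 (Fin.cons_zero _ _)
    rcases (hST u).2 hu with hS | huT
    · obtain ⟨y1, hy1, hle1, hb1⟩ := exists_of_two_mul_dA u _ hS
      obtain ⟨y2, hy2, hle2, hb2⟩ := exists_of_two_mul_dA _ _ hKb
      obtain ⟨z, hz, hzle, hzd⟩ :=
        key_witness S K1 u v true true y1 y2 hy1.1 hy1.2 hy2.1 hy2.2 hle1 hle2
      simp only [ne_eq, not_true_eq_false, if_false] at hzd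
      have hb : dA x (sec (ads S K1 ∪ ads T K2) i0 true) ≤
          (hammingDist (Fin.append u v) z : ℕ∞) := by
        rw [hx]; exact dA_le _ z _ ⟨Or.inl hz.1, hz.2⟩ hzle
      have hnat : 2 * hammingDist (Fin.append u v) z + 1 ≤ N + N' - 1 := by omega
      calc 2 * dA x (sec (ads S K1 ∪ ads T K2) i0 true) + 1
          ≤ 2 * (hammingDist (Fin.append u v) z : ℕ∞) + 1 :=
            add_le_add_left (by gcongr) 1
        _ ≤ ((N + N' - 1 : ℕ) : ℕ∞) := by exact_mod_cast hnat
    · have hK2b := (hK2 (Fin.cons true v)).2 (Fin.cons_zero _ _)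
      obtain ⟨y2, hy2, hle2, hb2⟩ := exists_of_two_mul_dA _ _ hK2b
      obtain ⟨z, hz, hzle, hzd⟩ :=
        key_witness T K2 u v true true u y2 huT hu hy2.1 hy2.2 (fun i => le_refl _) hle2
      rw [hammingDist_self] at hzd
      simp only [ne_eq, not_true_eq_false, if_false] at hzd
      have hb : dA x (sec (ads S K1 ∪ ads T K2) i0 true) ≤
          (hammingDist (Fin.append u v) z : ℕ∞) := by
        rw [hx]; exact dA_le _ z _ ⟨Or.inr hz.1, hz.2⟩ hzle
      have hnat : 2 * hammingDist (Fin.append u v) z + 1 ≤ N + N' - 1 := by omega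
      calc 2 * dA x (sec (ads S K1 ∪ ads T K2) i0 true) + 1
          ≤ 2 * (hammingDist (Fin.append u v) z : ℕ∞) + 1 :=
            add_le_add_left (by gcongr) 1
        _ ≤ ((N + N' - 1 : ℕ) : ℕ∞) := by exact_mod_cast hnat
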